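/- If G is a connected graph on n vertices with minimum degree δ, then G has a connected spanning subgraph with minimum degree δ and with fewer than n(δ + 1/(δ+1)) edges. -/

import Mathlib

open SimpleGraph

/-- A coloring `c` is a rainbow vertex-coloring witness with `k` colors: any two vertices are
joined by a path whose internal vertices have distinct colors, all among the first `k` colors. -/
def IsRainbowVColoring {V : Type*} (G : SimpleGraph V) (c : V → ℕ) (k : ℕ) : Prop :=
  ∀ u v : V, ∃ p : G.Walk u v, p.IsPath ∧ (p.support.tail.dropLast.map c).Nodup ∧
    ∀ w ∈ p.support.tail.dropLast, c w < k

/-- The rainbow vertex-connection number. -/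
noncomputable def rvc {V : Type*} (G : SimpleGraph V) : ℕ :=
  sInf {k : ℕ | ∃ c : V → ℕ, IsRainbowVColoring G c k}

/-- Along any `G`-walk between `H`-unreachable vertices there is a `G`-edge whose
endpoints are `H`-unreachable. -/
lemma cross_edge {V : Type*} {G H : SimpleGraph V} {a b : V}
    (p : G.Walk a b) (hab : ¬ H.Reachable a b) :
    ∃ u v, G.Adj u v ∧ ¬ H.Reachable u v := by
  induction p with
  | nil => exact absurd (Reachable.refl _) hab
  | @cons a' b' c' h q ih =>
    by_cases hr : H.Reachable a' b'
    · exact ih (fun h' => hab (hr.trans h'))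
    · exact ⟨_, _, h, hr⟩

/-- Connecting-up lemma: any spanning subgraph of a connected graph can be extended to a
connected spanning subgraph by adding at most (number of components - 1) edges. -/
lemma connect_up {V : Type*} [Fintype V] {G : SimpleGraph V} (hG : G.Connected) :
    ∀ k (H : SimpleGraph V), H ≤ G → Nat.card H.ConnectedComponent ≤ k →
    ∃ H', H ≤ H' ∧ H' ≤ G ∧ H'.Connected ∧
      H'.edgeSet.ncard ≤ H.edgeSet.ncard + (k - 1) := by
  intro k
  induction k with
  | zero =>
    intro H _ hcard
    have : Nonempty V := hG.nonempty
    haveI : Nonempty H.ConnectedComponent := ⟨H.connectedComponentMk (Classical.arbitrary V)⟩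
    have : 0 < Nat.card H.ConnectedComponent := Nat.card_pos
    omega
  | succ k ih =>
    intro H hHG hcard
    by_cases hc : H.Connected
    · exact ⟨H, le_rfl, hHG, hc, Nat.le_add_right _ _⟩
    · have : Nonempty V := hG.nonempty
      have hpre : ¬ H.Preconnected := fun h => hc ⟨h⟩
      rw [Preconnected] at hpre
      push_neg at hpre
      obtain ⟨a, b, hab⟩ := hpre
      obtain ⟨u, v, huv, hur⟩ := cross_edge ((hG.preconnected a b).some) hab
      have hne : u ≠ v := huv.ne
      set H' : SimpleGraph V := H ⊔ fromEdgeSet {s(u, v)} with hH'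
      have hHH' : H ≤ H' := le_sup_left
      have hH'G : H' ≤ G := by
        refine sup_le hHG ?_
        intro x y hxy
        rw [fromEdgeSet_adj] at hxy
        obtain ⟨h1, _⟩ := hxy
        simp only [Set.mem_singleton_iff, Sym2.eq_iff] at h1
        rcases h1 with ⟨rfl, rfl⟩ | ⟨rfl, rfl⟩
        · exact huv
        · exact huv.symm
      -- edge count
      have hedge : H'.edgeSet.ncard ≤ H.edgeSet.ncard + 1 := by
        rw [hH', edgeSet_sup]
        refine le_trans (Set.ncard_union_le _ _) ?_
        have : (fromEdgeSet {s(u, v)}).edgeSet.ncard ≤ 1 := by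
          rw [edgeSet_fromEdgeSet]
          refine le_trans (Set.ncard_le_ncard Set.diff_subset (Set.finite_singleton _)) ?_
          simp
        omega
      -- component count decreases
      have hcc : Nat.card H'.ConnectedComponent < Nat.card H.ConnectedComponent := by
        set f : H.ConnectedComponent → H'.ConnectedComponent :=
          ConnectedComponent.map (Hom.ofLE hHH') with hf
        have hsurj : Function.Surjective f := by
          intro c
          refine c.ind (fun w => ?_)
          exact ⟨H.connectedComponentMk w, rfl⟩
        have hninj : ¬ Function.Injective f := by
          intro hinj
          have hadj : H'.Adj u v := by
            refine Or.inr ?_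
            rw [fromEdgeSet_adj]
            exact ⟨rfl, hne⟩
          have h1 : f (H.connectedComponentMk u) = f (H.connectedComponentMk v) :=
            ConnectedComponent.sound hadj.reachable
          have h2 := hinj h1
          exact hur ((ConnectedComponent.eq).mp h2)
        have hle : Nat.card H'.ConnectedComponent ≤ Nat.card H.ConnectedComponent :=
          Nat.card_le_card_of_surjective f hsurj
        rcases lt_or_eq_of_le hle with h | h
        · exact h
        · exact absurd ((Nat.bijective_iff_surjective_and_card f).mpr ⟨hsurj, h.symm⟩).1 hninj
      haveI : Nonempty H'.ConnectedComponent :=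
        ⟨H'.connectedComponentMk (Classical.arbitrary V)⟩
      have hpos : 0 < Nat.card H'.ConnectedComponent := Nat.card_pos
      obtain ⟨H'', h1, h2, h3, h4⟩ := ih H' hH'G (by omega)
      refine ⟨H'', le_trans hHH' h1, h2, h3, by omega⟩

/-- Each component of a graph with min degree δ has ≥ δ+1 vertices, hence the number of
components times (δ+1) is at most the number of vertices. -/
lemma card_cc_mul_le {V : Type*} [Fintype V] (H : SimpleGraph V) (δ : ℕ)
    (hd : ∀ v, δ ≤ (H.neighborSet v).ncard) :
    Nat.card H.ConnectedComponent * (δ + 1) ≤ Fintype.card V := by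
  classical
  letI : Fintype H.ConnectedComponent := Fintype.ofFinite _
  have hcard : Fintype.card V =
      ∑ c : H.ConnectedComponent,
        (Finset.univ.filter (fun v => H.connectedComponentMk v = c)).card := by
    exact Finset.card_eq_sum_card_fiberwise (fun x _ => Finset.mem_univ _)
  have hfib : ∀ c : H.ConnectedComponent, δ + 1 ≤
      (Finset.univ.filter (fun v => H.connectedComponentMk v = c)).card := by
    intro c
    obtain ⟨v, rfl⟩ := c.exists_rep
    have hsub : insert v (H.neighborSet v).toFinset ⊆
        Finset.univ.filter (fun w => H.connectedComponentMk w = H.connectedComponentMk v) := by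
      intro w hw
      simp only [Finset.mem_insert, Set.mem_toFinset, mem_neighborSet] at hw
      rw [Finset.mem_filter]
      refine ⟨Finset.mem_univ _, ?_⟩
      rcases hw with rfl | hw
      · rfl
      · exact ConnectedComponent.sound hw.symm.reachable
    refine le_trans ?_ (Finset.card_le_card hsub)
    rw [Finset.card_insert_of_notMem (by simp)]
    have : δ ≤ (H.neighborSet v).toFinset.card := by
      rw [← Set.ncard_eq_toFinset_card']; exact hd v
    omega
  rw [hcard, Nat.card_eq_fintype_card]
  calc Fintype.card H.ConnectedComponent * (δ + 1)
      = Finset.univ.card • (δ + 1) := by rw [Finset.card_univ, smul_eq_mul]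
    _ ≤ _ := Finset.card_nsmul_le_sum _ _ _ (fun c _ => hfib c)

/-- Deleting an edge removes exactly one neighbor at an endpoint. -/
lemma nbr_delete_self {V : Type*} (H : SimpleGraph V) (a b : V) :
    (H.deleteEdges {s(a, b)}).neighborSet a = H.neighborSet a \ {b} := by
  ext x
  simp only [mem_neighborSet, deleteEdges_adj, Set.mem_diff, Set.mem_singleton_iff,
    Sym2.congr_right]

/-- Deleting an edge does not change neighbors away from the endpoints. -/
lemma nbr_delete_other {V : Type*} (H : SimpleGraph V) {a b w : V} (hw1 : w ≠ a)
    (hw2 : w ≠ b) : (H.deleteEdges {s(a, b)}).neighborSet w = H.neighborSet w := by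
  ext x
  simp only [mem_neighborSet, deleteEdges_adj, Set.mem_singleton_iff]
  constructor
  · exact fun h => h.1
  · intro h
    refine ⟨h, fun hx => ?_⟩
    rw [Sym2.eq_iff] at hx
    rcases hx with ⟨rfl, rfl⟩ | ⟨rfl, rfl⟩ <;> simp_all

/-- A spanning subgraph with min degree ≥ δ and at most n·δ edges exists. -/
lemma min_sub_exists {V : Type*} [Fintype V] (G : SimpleGraph V) (δ : ℕ)
    (hd : ∀ v, δ ≤ (G.neighborSet v).ncard) :
    ∃ H ≤ G, (∀ v, δ ≤ (H.neighborSet v).ncard) ∧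
      H.edgeSet.ncard ≤ Fintype.card V * δ := by
  classical
  set S : Set (SimpleGraph V) := {H | H ≤ G ∧ ∀ v, δ ≤ (H.neighborSet v).ncard} with hS
  have hGS : G ∈ S := ⟨le_rfl, hd⟩
  set m : ℕ := sInf ((fun H : SimpleGraph V => H.edgeSet.ncard) '' S) with hm
  have hmem : m ∈ (fun H : SimpleGraph V => H.edgeSet.ncard) '' S :=
    Nat.sInf_mem ⟨_, ⟨G, hGS, rfl⟩⟩
  obtain ⟨H, hHS, hHm⟩ := hmem
  change H.edgeSet.ncard = m at hHm
  obtain ⟨hHG, hHd⟩ := hHS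
  refine ⟨H, hHG, hHd, ?_⟩
  -- every edge of H has an endpoint of degree exactly δ
  have key : ∀ e ∈ H.edgeSet, ∃ x, x ∈ e ∧ (H.neighborSet x).ncard = δ := by
    intro e he
    induction e with
    | h u v =>
      by_contra hcon
      push_neg at hcon
      have hu : (H.neighborSet u).ncard ≠ δ := hcon u (Sym2.mem_mk_left u v)
      have hv : (H.neighborSet v).ncard ≠ δ := hcon v (Sym2.mem_mk_right u v)
      have huδ : δ + 1 ≤ (H.neighborSet u).ncard := lt_of_le_of_ne (hHd u) (Ne.symm hu)
      have hvδ : δ + 1 ≤ (H.neighborSet v).ncard := lt_of_le_of_ne (hHd v) (Ne.symm hv)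
      have hadj : H.Adj u v := he
      set H₁ := H.deleteEdges {s(u, v)} with hH₁
      have hH₁le : H₁ ≤ H := deleteEdges_le _
      have hnbr : ∀ w, δ ≤ (H₁.neighborSet w).ncard := by
        intro w
        by_cases hwu : w = u
        · subst hwu
          rw [hH₁, nbr_delete_self]
          have hvmem : v ∈ H.neighborSet w := hadj
          rw [Set.ncard_diff_singleton_of_mem hvmem]
          omega
        · by_cases hwv : w = v
          · subst hwv
            have hswap : ({s(u, w)} : Set (Sym2 V)) = {s(w, u)} := by
              rw [Sym2.eq_swap]
            rw [hH₁, hswap, nbr_delete_self]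
            have humem : u ∈ H.neighborSet w := hadj.symm
            rw [Set.ncard_diff_singleton_of_mem humem]
            omega
          · rw [hH₁, nbr_delete_other H hwu hwv]
            exact hHd w
      have hmle : m ≤ H₁.edgeSet.ncard :=
        Nat.sInf_le ⟨H₁, ⟨le_trans hH₁le hHG, hnbr⟩, rfl⟩
      have hlt : H₁.edgeSet.ncard < H.edgeSet.ncard := by
        rw [hH₁, edgeSet_deleteEdges]
        refine Set.ncard_lt_ncard ?_ (Set.toFinite _)
        constructor
        · exact Set.diff_subset
        · intro hsub
          have := hsub he
          simp at this
      omega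
  -- counting
  have hcount : H.edgeSet.ncard ≤ Fintype.card V * δ := by
    set T := (H.edgeSet.toFinite).toFinset with hT
    have hTcard : H.edgeSet.ncard = T.card := Set.ncard_eq_toFinset_card _ _
    set D : Finset V := Finset.univ.filter (fun v => (H.neighborSet v).ncard = δ) with hD
    have hsub : T ⊆ D.biUnion (fun v => (H.incidenceSet v).toFinite.toFinset) := by
      intro e heT
      rw [Set.Finite.mem_toFinset] at heT
      obtain ⟨x, hxe, hxδ⟩ := key e heT
      rw [Finset.mem_biUnion]
      refine ⟨x, ?_, ?_⟩
      · rw [hD, Finset.mem_filter]; exact ⟨Finset.mem_univ _, hxδ⟩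
      · rw [Set.Finite.mem_toFinset]; exact ⟨heT, hxe⟩
    have hbound : (D.biUnion (fun v => (H.incidenceSet v).toFinite.toFinset)).card ≤
        Fintype.card V * δ := by
      refine le_trans (Finset.card_biUnion_le) ?_
      have : ∀ v ∈ D, ((H.incidenceSet v).toFinite.toFinset).card = δ := by
        intro v hvD
        rw [hD, Finset.mem_filter] at hvD
        rw [← Set.ncard_eq_toFinset_card]
        have : (H.incidenceSet v).ncard = (H.neighborSet v).ncard := by
          rw [← Nat.card_coe_set_eq, ← Nat.card_coe_set_eq]
          exact Nat.card_congr (H.incidenceSetEquivNeighborSet v)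
        rw [this, hvD.2]
      calc ∑ v ∈ D, ((H.incidenceSet v).toFinite.toFinset).card
          = ∑ _v ∈ D, δ := Finset.sum_congr rfl this
        _ = D.card * δ := by rw [Finset.sum_const, smul_eq_mul]
        _ ≤ Fintype.card V * δ := by
            exact Nat.mul_le_mul_right δ (Finset.card_le_card (Finset.subset_univ D))
    rw [hTcard]
    exact le_trans (Finset.card_le_card hsub) hbound
  exact hcount

theorem stmt_7 {V : Type*} [Fintype V] (G : SimpleGraph V) [DecidableRel G.Adj]
    (hG : G.Connected) (δ : ℕ) (hδ : G.minDegree = δ) :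
    ∃ H : SimpleGraph V, H ≤ G ∧ H.Connected ∧ (∀ v : V, δ ≤ (H.neighborSet v).ncard) ∧
      (H.edgeSet.ncard : ℝ) < (Fintype.card V : ℝ) * (δ + 1 / (δ + 1)) := by
  classical
  have : Nonempty V := hG.nonempty
  have hGd : ∀ v, δ ≤ (G.neighborSet v).ncard := by
    intro v
    have h1 : G.minDegree ≤ G.degree v := G.minDegree_le_degree v
    have h2 : (G.neighborSet v).ncard = G.degree v := by
      rw [← card_neighborFinset_eq_degree, neighborFinset_def, ← Set.ncard_eq_toFinset_card']
    omega
  obtain ⟨H₀, hH₀G, hH₀d, hH₀e⟩ := min_sub_exists G δ hGd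
  haveI : Nonempty H₀.ConnectedComponent := ⟨H₀.connectedComponentMk (Classical.arbitrary V)⟩
  set c := Nat.card H₀.ConnectedComponent with hc
  obtain ⟨H, hH₀H, hHG, hHconn, hHe⟩ := connect_up hG c H₀ hH₀G le_rfl
  have hHd : ∀ v, δ ≤ (H.neighborSet v).ncard := by
    intro v
    refine le_trans (hH₀d v) (Set.ncard_le_ncard ?_ (Set.toFinite _))
    intro x hx
    exact hH₀H hx
  refine ⟨H, hHG, hHconn, hHd, ?_⟩
  have hcpos : 1 ≤ c := by rw [hc]; exact Nat.card_pos
  have hcn : c * (δ + 1) ≤ Fintype.card V := card_cc_mul_le H₀ δ hH₀d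
  set n := Fintype.card V with hn
  have hEn : H.edgeSet.ncard ≤ n * δ + (c - 1) := by omega
  have hcast : (H.edgeSet.ncard : ℝ) ≤ (n : ℝ) * δ + ((c : ℝ) - 1) := by
    have : ((n * δ + (c - 1) : ℕ) : ℝ) = (n : ℝ) * δ + ((c : ℝ) - 1) := by
      push_cast [Nat.cast_sub hcpos]
      ring
    rw [← this]
    exact_mod_cast hEn
  have hcr : (c : ℝ) ≤ (n : ℝ) / (δ + 1) := by
    rw [le_div_iff₀ (by positivity)]
    exact_mod_cast hcn
  have hlast : (n : ℝ) * (δ + 1 / (δ + 1)) = (n : ℝ) * δ + (n : ℝ) / (δ + 1) := by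
    field_simp
  rw [hlast]
  have : ((c : ℝ) - 1) < (n : ℝ) / (δ + 1) := by linarith
  linarith
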